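/- Let C be a smashing triangulated category (closed under small coproducts) and let A be an extension-closed class of objects closed under coproducts and closed under the shift [1] (or under [-1]). Then A is retraction-closed in C: any retract of an object of A belongs to A. -/

import Mathlib

open CategoryTheory CategoryTheory.Limits CategoryTheory.Pretriangulated ZeroObject

universe w' v u

variable (C : Type u) [Category.{v} C] [HasZeroObject C] [HasShift C ℤ]
  [Preadditive C] [∀ n : ℤ, (shiftFunctor C n).Additive] [Pretriangulated C]

/-- A t-structure `t = (C_{t≤0}, C_{t≥0})` on a triangulated category, in the homological
convention of the paper.  `le` is the class `C_{t≤0}` and `ge` is the class `C_{t≥0}`.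
The condition `C_{t≤0} ⊆ C_{t≤0}[1]` is encoded as `le X → le (X⟦-1⟧)` (the classes being
closed under isomorphism), and `C_{t≥0}[1] ⊆ C_{t≥0}` as `ge X → ge (X⟦1⟧)`.
The class `C_{t≤i} = C_{t≤0}[i]` is `fun X => le (X⟦-i⟧)` and similarly for `C_{t≥i}`. -/
structure PaperTStructure where
  /-- the class `C_{t≤0}` -/
  le : C → Prop
  /-- the class `C_{t≥0}` -/
  ge : C → Prop
  le_iso : ∀ {X Y : C}, (X ≅ Y) → le X → le Y
  ge_iso : ∀ {X Y : C}, (X ≅ Y) → ge X → ge Y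
  le_shift : ∀ X : C, le X → le (X⟦(-1 : ℤ)⟧)
  ge_shift : ∀ X : C, ge X → ge (X⟦(1 : ℤ)⟧)
  /-- `C_{t≥0}[1] ⊥ C_{t≤0}` -/
  orth : ∀ (X Y : C), ge X → le Y → ∀ f : X⟦(1 : ℤ)⟧ ⟶ Y, f = 0
  /-- every object `M` admits a `t`-decomposition `L → M → R → L[1]` with `L ∈ C_{t≥0}`,
  `R ∈ C_{t≤0}[-1]` (i.e. `R⟦1⟧ ∈ C_{t≤0}`) -/
  decomp : ∀ M : C, ∃ (L R : C) (f : L ⟶ M) (g : M ⟶ R) (h : R ⟶ L⟦(1 : ℤ)⟧),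
    (Triangle.mk f g h ∈ distTriang C) ∧ ge L ∧ le (R⟦(1 : ℤ)⟧)

/-- A weight structure `w = (C_{w≤0}, C_{w≥0})` on a triangulated category, in the homological
convention of the paper.  `le` is the class `C_{w≤0}` and `ge` is the class `C_{w≥0}`;
both are retraction-closed.  `C_{w≤i} = C_{w≤0}[i]` is `fun X => le (X⟦-i⟧)`, similarly `ge`. -/
structure PaperWeightStructure where
  /-- the class `C_{w≤0}` -/
  le : C → Prop
  /-- the class `C_{w≥0}` -/
  ge : C → Prop
  le_retract : ∀ (X Y : C), le Y → (∃ (i : X ⟶ Y) (r : Y ⟶ X), i ≫ r = 𝟙 X) → le X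
  ge_retract : ∀ (X Y : C), ge Y → (∃ (i : X ⟶ Y) (r : Y ⟶ X), i ≫ r = 𝟙 X) → ge X
  le_shift : ∀ X : C, le X → le (X⟦(-1 : ℤ)⟧)
  ge_shift : ∀ X : C, ge X → ge (X⟦(1 : ℤ)⟧)
  /-- `C_{w≤0} ⊥ C_{w≥0}[1]` -/
  orth : ∀ (X Y : C), le X → ge Y → ∀ f : X ⟶ Y⟦(1 : ℤ)⟧, f = 0
  /-- every object `M` admits a weight decomposition `L → M → R → L[1]` with `L ∈ C_{w≤0}`,
  `R ∈ C_{w≥0}[1]` (i.e. `R⟦-1⟧ ∈ C_{w≥0}`) -/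
  decomp : ∀ M : C, ∃ (L R : C) (f : L ⟶ M) (g : M ⟶ R) (h : R ⟶ L⟦(1 : ℤ)⟧),
    (Triangle.mk f g h ∈ distTriang C) ∧ le L ∧ ge (R⟦(-1 : ℤ)⟧)

/-- A class of objects is extension-closed if it contains `0` and for every distinguished
triangle `X → Y → Z → X[1]` with `X, Z` in the class, `Y` lies in the class. -/
def ExtClosed (P : C → Prop) : Prop :=
  P (0 : C) ∧ ∀ T : Triangle C, (T ∈ distTriang C) → P T.obj₁ → P T.obj₃ → P T.obj₂

/-- A class of objects is retraction-closed if it contains all retracts of its elements. -/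
def RetractClosed (P : C → Prop) : Prop :=
  ∀ X Y : C, P Y → (∃ (i : X ⟶ Y) (r : Y ⟶ X), i ≫ r = 𝟙 X) → P X

/-- A coproduct of binary biproducts is the binary biproduct of the coproducts. -/
noncomputable def sigmaBiprodIso {ι : Type w'} [HasCoproducts.{w'} C] [HasBinaryBiproducts C]
    (P Q : ι → C) : (∐ fun n => P n ⊞ Q n) ≅ (∐ P) ⊞ (∐ Q) where
  hom := Sigma.desc fun n => biprod.map (Sigma.ι P n) (Sigma.ι Q n)
  inv := biprod.desc (Limits.Sigma.map fun n => (biprod.inl : P n ⟶ P n ⊞ Q n))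
    (Limits.Sigma.map fun n => (biprod.inr : Q n ⟶ P n ⊞ Q n))
  hom_inv_id := by ext n <;> simp [Limits.Sigma.map]
  inv_hom_id := by ext n <;> simp [Limits.Sigma.map]

/-- The Eilenberg swindle isomorphism `X ⊞ ∐ℕ X ≅ ∐ℕ X`. -/
noncomputable def swindleIso [HasCoproducts.{w'} C] [HasBinaryBiproducts C] (X : C) :
    X ⊞ (∐ fun _ : ULift.{w'} ℕ => X) ≅ (∐ fun _ : ULift.{w'} ℕ => X) where
  hom := biprod.desc (Sigma.ι (fun _ : ULift.{w'} ℕ => X) ⟨0⟩)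
    (Sigma.desc fun n => Sigma.ι (fun _ : ULift.{w'} ℕ => X) ⟨n.down + 1⟩)
  inv := Sigma.desc fun n => match n with
    | ⟨0⟩ => biprod.inl
    | ⟨k + 1⟩ => Sigma.ι (fun _ : ULift.{w'} ℕ => X) ⟨k⟩ ≫ biprod.inr
  hom_inv_id := by ext ⟨n⟩ <;> simp
  inv_hom_id := by
    ext ⟨n⟩
    cases n <;> simp

/-- in a triangulated category with all small coproducts, an extension-closed
class `A` that is closed under coproducts and closed under the shift `[1]` (or under `[-1]`)
is retraction-closed. -/
theorem stmt15 [HasCoproducts.{w'} C] (A : C → Prop) (hext : ExtClosed C A)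
    (hcoprod : ∀ {ι : Type w'} (X : ι → C), (∀ i, A (X i)) → A (∐ X))
    (hshift : (∀ X : C, A X → A (X⟦(1 : ℤ)⟧)) ∨ (∀ X : C, A X → A (X⟦(-1 : ℤ)⟧))) :
    RetractClosed C A := by
  -- `A` is closed under isomorphisms
  have hiso : ∀ {U V : C}, (U ≅ V) → A U → A V := by
    intro U V e hU
    refine hext.2 (Triangle.mk e.hom (0 : V ⟶ 0) (0 : (0 : C) ⟶ U⟦(1 : ℤ)⟧)) ?_ hU hext.1
    refine isomorphic_distinguished _ (contractible_distinguished U) _ ?_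
    refine Triangle.isoMk _ _ (Iso.refl U) e.symm (Iso.refl 0)
      ?_ ?_ ?_
    all_goals simp [Triangle.mk, contractibleTriangle]
  intro X Y hY hretract
  obtain ⟨i, r, hir⟩ := hretract
  -- build the cone `Z` of `i` and show the triangle splits
  obtain ⟨Z, g, h, hT⟩ := distinguished_cocone_triangle i
  have hzero : h = 0 := by
    have h31 := comp_distTriang_mor_zero₃₁ _ hT
    calc h = h ≫ (i ≫ r)⟦(1 : ℤ)⟧' := by rw [hir]; simp
    _ = (h ≫ i⟦(1 : ℤ)⟧') ≫ r⟦(1 : ℤ)⟧' := by rw [Functor.map_comp, Category.assoc]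
    _ = 0 := by rw [show h ≫ i⟦(1 : ℤ)⟧' = 0 from h31, zero_comp]
  obtain ⟨e, -, -⟩ := exists_iso_binaryBiproduct_of_distTriang _ hT hzero
  -- the Eilenberg swindle: `X ⊞ W ≅ W` where `W = ∐ ℕ copies of Y`
  set K : ULift.{w'} ℕ → C := fun _ => Y with hK
  have hW : A (∐ K) := hcoprod K (fun _ => hY)
  have eW : X ⊞ (∐ K) ≅ (∐ K) := by
    refine (biprod.mapIso (Iso.refl X)
      ((Sigma.mapIso (fun _ => e)) ≪≫ sigmaBiprodIso C (fun _ : ULift.{w'} ℕ => X)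
        (fun _ : ULift.{w'} ℕ => Z))) ≪≫ (biprod.associator _ _ _).symm ≪≫
      (biprod.mapIso (swindleIso.{w'} C X) (Iso.refl _)) ≪≫
      (sigmaBiprodIso C _ _).symm ≪≫ (Sigma.mapIso (fun _ => e)).symm
  rcases hshift with hs | hs
  · -- `A` closed under `[1]` : rotate the biproduct triangle `W → W ⊞ X → X → W[1]`
    have hT2 := rot_of_distTriang _ (binaryBiproductTriangle_distinguished (∐ K) X)
    exact hext.2 _ hT2 (hiso ((biprod.braiding (∐ K) X ≪≫ eW).symm) hW) (hs _ hW)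
  · -- `A` closed under `[-1]` : inverse rotate `X → X ⊞ W → W → X[1]`
    have hT2 := inv_rot_of_distTriang _ (binaryBiproductTriangle_distinguished X (∐ K))
    exact hext.2 _ hT2 (hs _ hW) (hiso eW.symm hW)
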